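/- (Global strong maximum principle) Let (X, μ) be a σ-finite measure space and k : X×X → (0,∞] a symmetric measurable kernel. Let U : X → ℝ be measurable and let v ∈ D(I) satisfy v ≥ 0 μ-a.e., U₊·min{v,1} ∈ L¹(X,μ) (U₊ := max(U,0)), and I[φ,v] + ∫_X φ U v dμ ≥ 0 for every 0 ≤ φ ∈ D(I) (the integral being assumed to exist in (−∞, +∞]). Then either v = 0 μ-a.e. on X or v > 0 μ-a.e. on X. -/

import Mathlib

open MeasureTheory Real
open scoped ENNReal

noncomputable section

variable {X : Type*}

/-- The quadratic form `I[w] = (1/2)∬ k(x,y)(w(x)-w(y))² dμ dμ`, as an extended real. -/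
def formI [MeasurableSpace X] (μ : Measure X) (k : X → X → ℝ≥0∞) (w : X → ℝ) : ℝ≥0∞ :=
  (1 / 2 : ℝ≥0∞) *
    ∫⁻ p : X × X, k p.1 p.2 * ENNReal.ofReal ((w p.1 - w p.2) ^ 2) ∂(μ.prod μ)

/-- The form domain `D(I)`. -/
def memDI [MeasurableSpace X] (μ : Measure X) (k : X → X → ℝ≥0∞) (w : X → ℝ) : Prop :=
  Measurable w ∧ formI μ k w < ⊤

/-- The bilinear form `I[v,w]`. -/
def formI₂ [MeasurableSpace X] (μ : Measure X) (k : X → X → ℝ≥0∞) (v w : X → ℝ) : ℝ :=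
  (1 / 2) *
    ∫ p : X × X, (k p.1 p.2).toReal * (v p.1 - v p.2) * (w p.1 - w p.2) ∂(μ.prod μ)

private lemma aux_anti {c a b : ℝ} (hc : 0 ≤ c) :
    (max (1 - c * a) 0 - max (1 - c * b) 0) * (a - b) ≤ 0 := by
  rcases le_total a b with h | h
  · have h1 : max (1 - c * b) 0 ≤ max (1 - c * a) 0 :=
      max_le_max (by nlinarith) le_rfl
    exact mul_nonpos_of_nonneg_of_nonpos (by linarith) (by linarith)
  · have h1 : max (1 - c * a) 0 ≤ max (1 - c * b) 0 :=
      max_le_max (by nlinarith) le_rfl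
    exact mul_nonpos_of_nonpos_of_nonneg (by linarith) (by linarith)

private lemma aux_lip {c a b : ℝ} (hc : 0 ≤ c) :
    |max (1 - c * a) 0 - max (1 - c * b) 0| ≤ c * |a - b| := by
  calc |max (1 - c*a) 0 - max (1 - c*b) 0| ≤ |(1 - c*a) - (1 - c*b)| :=
        abs_max_sub_max_le_abs _ _ _
    _ = c * |a - b| := by
        rw [show (1 - c*a) - (1 - c*b) = c * (b - a) by ring, abs_mul,
          abs_of_nonneg hc, abs_sub_comm]

private lemma aux_prod_le {c a u : ℝ} (ha : 0 ≤ a) (hc : 1 ≤ c) :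
    max (max (1 - c * a) 0 * u * a) 0 ≤ max u 0 * min a 1 := by
  have hmin : (0:ℝ) ≤ min a 1 := le_min ha zero_le_one
  rcases le_total u 0 with hu | hu
  · have h0 : max (1 - c*a) 0 * u * a ≤ 0 :=
      mul_nonpos_of_nonpos_of_nonneg
        (mul_nonpos_of_nonneg_of_nonpos (le_max_right _ _) hu) ha
    rw [max_eq_right h0]
    exact mul_nonneg (le_max_right u 0) hmin
  · have key : max (1 - c*a) 0 * a ≤ min a 1 := by
      rcases le_total (c*a) 1 with h | h
      · have ha1 : a ≤ 1 := le_trans (le_mul_of_one_le_left ha hc) h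
        rw [max_eq_left (by linarith), min_eq_left ha1]
        nlinarith [mul_nonneg (mul_nonneg (by linarith : (0:ℝ) ≤ c) ha) ha]
      · rw [max_eq_right (by linarith), zero_mul]
        exact hmin
    have hf : 0 ≤ max (1-c*a) 0 * u * a :=
      mul_nonneg (mul_nonneg (le_max_right _ _) hu) ha
    rw [max_eq_left hf, max_eq_left hu]
    calc max (1-c*a) 0 * u * a = u * (max (1-c*a) 0 * a) := by ring
      _ ≤ u * min a 1 := mul_le_mul_of_nonneg_left key hu

private lemma aux_min_mono {a u b b' : ℝ} (ha : 0 ≤ a) (hb' : 0 ≤ b') (hbb : b' ≤ b) :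
    |min (b' * u * a) 0| ≤ |min (b * u * a) 0| := by
  rcases le_total (u * a) 0 with h | h
  · have hle : b * u * a ≤ b' * u * a := by
      have := mul_le_mul_of_nonpos_right hbb h
      calc b * u * a = b * (u * a) := by ring
        _ ≤ b' * (u * a) := this
        _ = b' * u * a := by ring
    rw [abs_of_nonpos (min_le_right _ 0), abs_of_nonpos (min_le_right _ 0)]
    exact neg_le_neg (min_le_min hle le_rfl)
  · have h0 : 0 ≤ b' * u * a := by
      calc (0:ℝ) ≤ b' * (u * a) := mul_nonneg hb' h
        _ = b' * u * a := by ring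
    rw [min_eq_right h0, abs_zero]
    exact abs_nonneg _

private lemma aux_lower {c a : ℝ} (ha : 0 ≤ a) (hc : 1 ≤ c) :
    min a 1 ≤ 1 - max (1 - c * a) 0 := by
  rcases le_total (c*a) 1 with h | h
  · rw [max_eq_left (by linarith)]
    calc min a 1 ≤ a := min_le_left _ _
      _ ≤ c * a := le_mul_of_one_le_left ha hc
      _ = 1 - (1 - c * a) := by ring
  · rw [max_eq_right (by linarith)]
    simpa using min_le_right a 1

/-- global strong maximum principle. -/
theorem global_strong_maximum_principle [MeasurableSpace X] (μ : Measure X) [SigmaFinite μ]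
    (k : X → X → ℝ≥0∞) (hkmeas : Measurable (Function.uncurry k))
    (hkpos : ∀ x y, 0 < k x y) (hksymm : ∀ x y, k x y = k y x)
    (U : X → ℝ) (hU : Measurable U)
    (v : X → ℝ) (hv : memDI μ k v) (hv0 : ∀ᵐ x ∂μ, 0 ≤ v x)
    (hUint : Integrable (fun x => max (U x) 0 * min (v x) 1) μ)
    (hineq : ∀ φ : X → ℝ, memDI μ k φ → (∀ x, 0 ≤ φ x) →
      Integrable (fun x => min (φ x * U x * v x) 0) μ ∧
        (Integrable (fun x => φ x * U x * v x) μ →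
          0 ≤ formI₂ μ k φ v + ∫ x, φ x * U x * v x ∂μ)) :
    (∀ᵐ x ∂μ, v x = 0) ∨ (∀ᵐ x ∂μ, 0 < v x) := by

  classical
  obtain ⟨hvmeas, hvform⟩ := hv
  set φ : ℕ → X → ℝ := fun n x => max (1 - ((n:ℝ)+1) * v x) 0 with hφdef
  have hc1 : ∀ n : ℕ, (1:ℝ) ≤ (n:ℝ)+1 := fun n => by
    have : (0:ℝ) ≤ (n:ℝ) := Nat.cast_nonneg n
    linarith
  have hc0 : ∀ n : ℕ, (0:ℝ) ≤ (n:ℝ)+1 := fun n => by positivity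
  -- measurability
  have hkm : Measurable fun p : X × X => k p.1 p.2 := hkmeas
  have hkrm : Measurable fun p : X × X => (k p.1 p.2).toReal := hkm.ennreal_toReal
  have hv1 : Measurable fun p : X × X => v p.1 := hvmeas.comp measurable_fst
  have hv2 : Measurable fun p : X × X => v p.2 := hvmeas.comp measurable_snd
  have hΔ : Measurable fun p : X × X => v p.1 - v p.2 := hv1.sub hv2
  have hφm : ∀ n, Measurable (φ n) := fun n =>
    (measurable_const.sub (measurable_const.mul hvmeas)).max measurable_const
  have hφm1 : ∀ n, Measurable fun p : X × X => φ n p.1 := fun n => (hφm n).comp measurable_fst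
  have hφm2 : ∀ n, Measurable fun p : X × X => φ n p.2 := fun n => (hφm n).comp measurable_snd
  have hφpos : ∀ n x, 0 ≤ φ n x := fun n x => le_max_right _ _
  -- finiteness of the energy lintegral of v
  have hL : (∫⁻ p : X × X, k p.1 p.2 * ENNReal.ofReal ((v p.1 - v p.2)^2) ∂(μ.prod μ)) ≠ ⊤ := by
    intro h
    rw [formI, h, ENNReal.mul_top (by norm_num)] at hvform
    exact absurd hvform (lt_irrefl _)
  -- integrability of k.toReal * Δv²
  have hK2nonneg : ∀ p : X × X, 0 ≤ (k p.1 p.2).toReal * (v p.1 - v p.2)^2 :=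
    fun p => mul_nonneg ENNReal.toReal_nonneg (sq_nonneg _)
  have hK2meas : Measurable fun p : X × X => (k p.1 p.2).toReal * (v p.1 - v p.2)^2 :=
    hkrm.mul (hΔ.pow_const 2)
  have hK2int : Integrable (fun p : X × X => (k p.1 p.2).toReal * (v p.1 - v p.2)^2) (μ.prod μ) := by
    refine ⟨hK2meas.aestronglyMeasurable, ?_⟩
    rw [hasFiniteIntegral_iff_ofReal (Filter.Eventually.of_forall hK2nonneg)]
    calc (∫⁻ p : X × X, ENNReal.ofReal ((k p.1 p.2).toReal * (v p.1 - v p.2)^2) ∂(μ.prod μ))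
        ≤ ∫⁻ p : X × X, k p.1 p.2 * ENNReal.ofReal ((v p.1 - v p.2)^2) ∂(μ.prod μ) := by
          refine lintegral_mono fun p => ?_
          rw [ENNReal.ofReal_mul ENNReal.toReal_nonneg]
          exact mul_le_mul_left ENNReal.ofReal_toReal_le _
      _ < ⊤ := lt_top_iff_ne_top.mpr hL
  -- φ n ∈ D(I)
  have hφmem : ∀ n, memDI μ k (φ n) := by
    intro n
    refine ⟨hφm n, ?_⟩
    rw [formI]
    have hb : ∀ p : X × X, k p.1 p.2 * ENNReal.ofReal ((φ n p.1 - φ n p.2)^2)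
        ≤ ENNReal.ofReal (((n:ℝ)+1)^2) * (k p.1 p.2 * ENNReal.ofReal ((v p.1 - v p.2)^2)) := by
      intro p
      rw [← mul_assoc, mul_comm (ENNReal.ofReal _) (k p.1 p.2), mul_assoc]
      refine mul_le_mul_right ?_ _
      rw [← ENNReal.ofReal_mul (by positivity)]
      apply ENNReal.ofReal_le_ofReal
      have h1 : |φ n p.1 - φ n p.2| ≤ ((n:ℝ)+1) * |v p.1 - v p.2| := aux_lip (hc0 n)
      calc (φ n p.1 - φ n p.2)^2 = |φ n p.1 - φ n p.2|^2 := (sq_abs _).symm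
        _ ≤ (((n:ℝ)+1) * |v p.1 - v p.2|)^2 := by
            exact pow_le_pow_left₀ (abs_nonneg _) h1 2
        _ = ((n:ℝ)+1)^2 * (v p.1 - v p.2)^2 := by rw [mul_pow, sq_abs]
    calc (1/2 : ℝ≥0∞) * ∫⁻ p : X × X, k p.1 p.2 * ENNReal.ofReal ((φ n p.1 - φ n p.2)^2) ∂(μ.prod μ)
        ≤ (1/2 : ℝ≥0∞) * ∫⁻ p : X × X, ENNReal.ofReal (((n:ℝ)+1)^2) *
            (k p.1 p.2 * ENNReal.ofReal ((v p.1 - v p.2)^2)) ∂(μ.prod μ) := by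
          exact mul_le_mul_right (lintegral_mono hb) _
      _ = (1/2 : ℝ≥0∞) * (ENNReal.ofReal (((n:ℝ)+1)^2) *
            ∫⁻ p : X × X, k p.1 p.2 * ENNReal.ofReal ((v p.1 - v p.2)^2) ∂(μ.prod μ)) := by
          rw [lintegral_const_mul' _ _ ENNReal.ofReal_ne_top]
      _ < ⊤ := by
          refine ENNReal.mul_lt_top (by norm_num) ?_
          exact ENNReal.mul_lt_top ENNReal.ofReal_lt_top (lt_top_iff_ne_top.mpr hL)
  -- integrability of the bilinear integrand
  have hhmeas : ∀ n, Measurable fun p : X × X =>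
      (k p.1 p.2).toReal * (φ n p.1 - φ n p.2) * (v p.1 - v p.2) := fun n =>
    (hkrm.mul ((hφm1 n).sub (hφm2 n))).mul hΔ
  have hhint : ∀ n, Integrable (fun p : X × X =>
      (k p.1 p.2).toReal * (φ n p.1 - φ n p.2) * (v p.1 - v p.2)) (μ.prod μ) := by
    intro n
    refine Integrable.mono' (hK2int.const_mul (((n:ℝ)+1))) (hhmeas n).aestronglyMeasurable ?_
    refine Filter.Eventually.of_forall fun p => ?_
    rw [Real.norm_eq_abs, abs_mul, abs_mul]
    have h1 : |φ n p.1 - φ n p.2| ≤ ((n:ℝ)+1) * |v p.1 - v p.2| := aux_lip (hc0 n)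
    have h2 : |(k p.1 p.2).toReal| = (k p.1 p.2).toReal := abs_of_nonneg ENNReal.toReal_nonneg
    rw [h2]
    calc (k p.1 p.2).toReal * |φ n p.1 - φ n p.2| * |v p.1 - v p.2|
        ≤ (k p.1 p.2).toReal * (((n:ℝ)+1) * |v p.1 - v p.2|) * |v p.1 - v p.2| := by
          refine mul_le_mul_of_nonneg_right (mul_le_mul_of_nonneg_left h1 ENNReal.toReal_nonneg)
            (abs_nonneg _)
      _ = ((n:ℝ)+1) * ((k p.1 p.2).toReal * (v p.1 - v p.2)^2) := by
          rw [show ((v p.1 - v p.2):ℝ)^2 = |v p.1 - v p.2| * |v p.1 - v p.2| by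
            rw [abs_mul_abs_self]; ring]
          ring
  -- the inequality hypothesis applied to φ n
  have hkey := fun n => hineq (φ n) (hφmem n) (hφpos n)
  -- integrability of φ n * U * v
  have hmaxint : ∀ n, Integrable (fun x => max (φ n x * U x * v x) 0) μ := by
    intro n
    refine Integrable.mono' hUint
      (((((hφm n).mul hU).mul hvmeas).max measurable_const).aestronglyMeasurable) ?_
    filter_upwards [hv0] with x hx
    rw [Real.norm_eq_abs, abs_of_nonneg (le_max_right _ _)]
    exact aux_prod_le hx (hc1 n)
  have hφUvint : ∀ n, Integrable (fun x => φ n x * U x * v x) μ := by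
    intro n
    have := (hmaxint n).add (hkey n).1
    refine this.congr (Filter.Eventually.of_forall fun x => ?_)
    simpa using (max_add_min (φ n x * U x * v x) 0).trans (add_zero _)
  have hform : ∀ n, 0 ≤ formI₂ μ k (φ n) v + ∫ x, φ n x * U x * v x ∂μ :=
    fun n => (hkey n).2 (hφUvint n)
  -- c n → 0 by dominated convergence
  have hcn : Filter.Tendsto (fun n => ∫ x, φ n x * U x * v x ∂μ) Filter.atTop (nhds 0) := by
    have h0 : (0:ℝ) = ∫ x, (0:ℝ) ∂μ := by simp
    rw [h0]
    refine tendsto_integral_of_dominated_convergence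
      (fun x => max (U x) 0 * min (v x) 1 + |min (φ 0 x * U x * v x) 0|)
      (fun n => ((((hφm n).mul hU).mul hvmeas)).aestronglyMeasurable)
      (hUint.add (hkey 0).1.abs) ?_ ?_
    · intro n
      filter_upwards [hv0] with x hx
      rw [Real.norm_eq_abs]
      have hsplit : |φ n x * U x * v x| = max (φ n x * U x * v x) 0 + |min (φ n x * U x * v x) 0| := by
        rcases le_total (φ n x * U x * v x) 0 with h | h
        · rw [max_eq_right h, min_eq_left h, abs_of_nonpos h, zero_add]
        · rw [max_eq_left h, min_eq_right h, abs_of_nonneg h, abs_zero, add_zero]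
      rw [hsplit]
      refine add_le_add (aux_prod_le hx (hc1 n)) ?_
      have hφle : φ n x ≤ φ 0 x := by
        refine max_le_max ?_ le_rfl
        push_cast
        nlinarith [mul_nonneg (Nat.cast_nonneg (α := ℝ) n) hx]
      exact aux_min_mono (u := U x) hx (hφpos n x) hφle
    · filter_upwards [hv0] with x hx
      rcases eq_or_lt_of_le hx with h | h
      · have : ∀ n : ℕ, φ n x * U x * v x = 0 := by
          intro n; rw [← h]; ring
        simpa [this] using tendsto_const_nhds
      · obtain ⟨N, hN⟩ := exists_nat_ge (1 / v x)
        refine Filter.Tendsto.congr' ?_ (tendsto_const_nhds (x := (0:ℝ)))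
        filter_upwards [Filter.eventually_ge_atTop N] with n hn
        have hNn : (N:ℝ) ≤ (n:ℝ) := Nat.cast_le.mpr hn
        have h1 : 1 ≤ ((n:ℝ)+1) * v x := by
          have h2 : 1 / v x ≤ (n:ℝ) := le_trans hN hNn
          have h3 : 1 ≤ (n:ℝ) * v x := by
            rw [div_le_iff₀ h] at h2
            linarith
          nlinarith
        have : φ n x = 0 := max_eq_right (by linarith)
        rw [this, zero_mul, zero_mul]
  -- the set S and lower bound function G
  set S : Set (X × X) := {p : X × X | v p.1 = 0} ∩ {p : X × X | 0 < v p.2} with hSdef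
  have hSmeas : MeasurableSet S :=
    (hv1 (measurableSet_singleton 0)).inter (hv2 measurableSet_Ioi)
  set G : X × X → ℝ := S.indicator (fun p => (k p.1 p.2).toReal * (min (v p.2) 1 * v p.2))
    with hGdef
  have hGmeas : Measurable G :=
    (hkrm.mul (((hv2.min measurable_const)).mul hv2)).indicator hSmeas
  -- pointwise bound: ofReal G ≤ ofReal (-(h n))
  have hGle : ∀ n, ∀ p : X × X, ENNReal.ofReal (G p) ≤
      ENNReal.ofReal (-((k p.1 p.2).toReal * (φ n p.1 - φ n p.2) * (v p.1 - v p.2))) := by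
    intro n p
    by_cases hp : p ∈ S
    · have h1 : v p.1 = 0 := hp.1
      have h2 : 0 < v p.2 := hp.2
      rw [hGdef, Set.indicator_of_mem hp]
      apply ENNReal.ofReal_le_ofReal
      have hφ1 : φ n p.1 = 1 := by
        simp [hφdef, h1]
      rw [hφ1, h1]
      have hlow : min (v p.2) 1 ≤ 1 - φ n p.2 := aux_lower (le_of_lt h2) (hc1 n)
      have : -((k p.1 p.2).toReal * (1 - φ n p.2) * (0 - v p.2))
          = (k p.1 p.2).toReal * ((1 - φ n p.2) * v p.2) := by ring
      rw [this]
      refine mul_le_mul_of_nonneg_left ?_ ENNReal.toReal_nonneg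
      exact mul_le_mul_of_nonneg_right hlow (le_of_lt h2)
    · rw [hGdef, Set.indicator_of_notMem hp]
      simp
  -- lintegral of ofReal G is at most ofReal (2 * c n)
  have hGbound : ∀ n, (∫⁻ p, ENNReal.ofReal (G p) ∂(μ.prod μ)) ≤
      ENNReal.ofReal (2 * ∫ x, φ n x * U x * v x ∂μ) := by
    intro n
    have hneg : ∀ p : X × X,
        0 ≤ -((k p.1 p.2).toReal * (φ n p.1 - φ n p.2) * (v p.1 - v p.2)) := by
      intro p
      have := aux_anti (c := (n:ℝ)+1) (a := v p.1) (b := v p.2) (hc0 n)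
      have h2 : (k p.1 p.2).toReal * ((φ n p.1 - φ n p.2) * (v p.1 - v p.2)) ≤ 0 :=
        mul_nonpos_of_nonneg_of_nonpos ENNReal.toReal_nonneg this
      nlinarith
    calc (∫⁻ p, ENNReal.ofReal (G p) ∂(μ.prod μ))
        ≤ ∫⁻ p, ENNReal.ofReal
            (-((k p.1 p.2).toReal * (φ n p.1 - φ n p.2) * (v p.1 - v p.2))) ∂(μ.prod μ) :=
          lintegral_mono (hGle n)
      _ = ENNReal.ofReal (∫ p : X × X,
            -((k p.1 p.2).toReal * (φ n p.1 - φ n p.2) * (v p.1 - v p.2)) ∂(μ.prod μ)) :=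
          (ofReal_integral_eq_lintegral_ofReal (hhint n).neg
            (Filter.Eventually.of_forall hneg)).symm
      _ ≤ ENNReal.ofReal (2 * ∫ x, φ n x * U x * v x ∂μ) := by
          apply ENNReal.ofReal_le_ofReal
          rw [integral_neg]
          have hf2 : formI₂ μ k (φ n) v = (1/2) * ∫ p : X × X,
              (k p.1 p.2).toReal * (φ n p.1 - φ n p.2) * (v p.1 - v p.2) ∂(μ.prod μ) := rfl
          have := hform n
          rw [hf2] at this
          linarith
  -- conclude lintegral of ofReal G = 0
  have hG0 : (∫⁻ p, ENNReal.ofReal (G p) ∂(μ.prod μ)) = 0 := by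
    have htend : Filter.Tendsto (fun n => ENNReal.ofReal (2 * ∫ x, φ n x * U x * v x ∂μ))
        Filter.atTop (nhds 0) := by
      have h2 : Filter.Tendsto (fun n => 2 * ∫ x, φ n x * U x * v x ∂μ) Filter.atTop (nhds 0) := by
        simpa using hcn.const_mul 2
      simpa using ENNReal.tendsto_ofReal h2
    have := ge_of_tendsto' htend (fun n => hGbound n)
    exact le_antisymm this (zero_le')
  have hGae : ∀ᵐ p ∂(μ.prod μ), ENNReal.ofReal (G p) = 0 := by
    have h := (lintegral_eq_zero_iff hGmeas.ennreal_ofReal).mp hG0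
    filter_upwards [h] with p hp
    simpa using hp
  -- a.e. finiteness of k where Δv ≠ 0
  have hfin : ∀ᵐ p ∂(μ.prod μ), k p.1 p.2 * ENNReal.ofReal ((v p.1 - v p.2)^2) < ⊤ :=
    ae_lt_top (hkm.mul (hΔ.pow_const 2).ennreal_ofReal) hL
  -- S is null
  have hSnull : (μ.prod μ) S = 0 := by
    have : ∀ᵐ p ∂(μ.prod μ), p ∉ S := by
      filter_upwards [hGae, hfin] with p h1 h2 hp
      have ha : v p.1 = 0 := hp.1
      have hb : 0 < v p.2 := hp.2
      rw [hGdef, Set.indicator_of_mem hp] at h1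
      rw [ENNReal.ofReal_eq_zero] at h1
      have hpos : 0 < min (v p.2) 1 * v p.2 :=
        mul_pos (lt_min hb one_pos) hb
      have hk0 : (k p.1 p.2).toReal = 0 := by
        by_contra hne
        have : 0 < (k p.1 p.2).toReal := lt_of_le_of_ne ENNReal.toReal_nonneg (Ne.symm hne)
        nlinarith
      rcases (ENNReal.toReal_eq_zero_iff _).mp hk0 with hk | hk
      · exact absurd hk (ne_of_gt (hkpos p.1 p.2))
      · rw [hk] at h2
        have hΔne : (v p.1 - v p.2)^2 > 0 := by
          have : v p.1 - v p.2 ≠ 0 := by rw [ha]; simpa using ne_of_gt hb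
          positivity
        rw [ENNReal.top_mul (by simpa [ENNReal.ofReal_eq_zero] using not_le.mpr hΔne)] at h2
        exact absurd h2 (lt_irrefl _)
    have h := ae_iff.mp this
    simp only [not_not] at h
    simpa [Set.setOf_mem_eq] using h
  -- conclude
  have hprod : μ {x | v x = 0} * μ {x | 0 < v x} = 0 := by
    have hrect : S = {x | v x = 0} ×ˢ {x | 0 < v x} := by
      ext p
      simp [hSdef, Set.mem_prod, Set.mem_setOf_eq]
    rw [← Measure.prod_prod, ← hrect]
    exact hSnull
  rcases mul_eq_zero.mp hprod with h | h
  · right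
    have hne : ∀ᵐ x ∂μ, ¬ v x = 0 := by
      rw [ae_iff]
      simpa using h
    filter_upwards [hv0, hne] with x h1 h2
    exact lt_of_le_of_ne h1 (Ne.symm h2)
  · left
    have hng : ∀ᵐ x ∂μ, ¬ 0 < v x := by
      rw [ae_iff]
      simpa using h
    filter_upwards [hv0, hng] with x h1 h2
    exact le_antisymm (not_lt.mp h2) h1

end
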